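/- Let r ≥ 0 and m ≥ 1. In the graph A_m (with vertices a_0,…,a_{m-1} and b_J for J ⊆ {0,…,m-1}, and internally disjoint paths of length r+1 joining a_i to b_J exactly when i ∈ J), for all i and J there is a path of length exactly r+1 from a_i to b_J if and only if i ∈ J. -/
import Mathlib


/-- Index type for the paths of the graph `A_m`: pairs `(i, J)` with `i ∈ J`. -/
def AIdx (m : ℕ) := {p : Fin m × Set (Fin m) // p.1 ∈ p.2}

/-- Auxiliary relation for the graph `A_m` with subdivision parameter `r`:
vertices `a_i`, vertices `b_J` for `J ⊆ {0,…,m-1}`, and internally disjoint paths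
of length `r+1` joining `a_i` to `b_J` exactly when `i ∈ J`. -/
def AgraphRel (m r : ℕ) :
    (Fin m ⊕ Set (Fin m) ⊕ AIdx m × Fin r) →
    (Fin m ⊕ Set (Fin m) ⊕ AIdx m × Fin r) → Prop
  | Sum.inl i, Sum.inr (Sum.inl J) => r = 0 ∧ i ∈ J
  | Sum.inl i, Sum.inr (Sum.inr (e, k)) => e.val.1 = i ∧ k.val = 0
  | Sum.inr (Sum.inl J), Sum.inr (Sum.inr (e, k)) => e.val.2 = J ∧ k.val = r - 1
  | Sum.inr (Sum.inr (e, k)), Sum.inr (Sum.inr (e', k')) => e = e' ∧ k'.val = k.val + 1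
  | _, _ => False

/-- The incidence graph `A_m` (with each incidence path of length `r+1`). -/
def Agraph (m r : ℕ) : SimpleGraph (Fin m ⊕ Set (Fin m) ⊕ AIdx m × Fin r) :=
  SimpleGraph.fromRel (AgraphRel m r)

/-- Potential function: distance-like level of each vertex. -/
def Aphi (m r : ℕ) : (Fin m ⊕ Set (Fin m) ⊕ AIdx m × Fin r) → ℕ
  | Sum.inl _ => 0
  | Sum.inr (Sum.inl _) => r + 1
  | Sum.inr (Sum.inr (_, k)) => k.val + 1

lemma Aphi_rel {m r : ℕ} {u v : Fin m ⊕ Set (Fin m) ⊕ AIdx m × Fin r}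
    (h : AgraphRel m r u v) :
    Aphi m r v = Aphi m r u + 1 ∨ Aphi m r u = Aphi m r v + 1 := by
  match u, v with
  | Sum.inl i, Sum.inr (Sum.inl J) =>
      left; simp [Aphi, h.1]
  | Sum.inl i, Sum.inr (Sum.inr (e, k)) =>
      left; simp [Aphi, h.2]
  | Sum.inr (Sum.inl J), Sum.inr (Sum.inr (e, k)) =>
      right
      have hk : k.val < r := k.isLt
      have hr : 1 ≤ r := Nat.one_le_iff_ne_zero.mpr (by rintro rfl; exact absurd hk (by omega))
      simp [Aphi, h.2]
      omega
  | Sum.inr (Sum.inr (e, k)), Sum.inr (Sum.inr (e', k')) =>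
      left; simp [Aphi, h.2]

lemma Aphi_adj {m r : ℕ} {u v : Fin m ⊕ Set (Fin m) ⊕ AIdx m × Fin r}
    (h : (Agraph m r).Adj u v) :
    Aphi m r v = Aphi m r u + 1 ∨ Aphi m r u = Aphi m r v + 1 := by
  rw [Agraph, SimpleGraph.fromRel_adj] at h
  rcases h.2 with h' | h'
  · exact Aphi_rel h'
  · exact (Aphi_rel h').symm

lemma Aphi_walk_le {m r : ℕ} {u v : Fin m ⊕ Set (Fin m) ⊕ AIdx m × Fin r}
    (p : (Agraph m r).Walk u v) : Aphi m r v ≤ Aphi m r u + p.length := by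
  induction p with
  | nil => simp
  | cons h q ih =>
      rcases Aphi_adj h with h' | h' <;> simp [SimpleGraph.Walk.length_cons] <;> omega

/-- The key invariant for the backward direction. -/
def AC (m r : ℕ) (J : Set (Fin m)) : (Fin m ⊕ Set (Fin m) ⊕ AIdx m × Fin r) → Prop
  | Sum.inl i => i ∈ J
  | Sum.inr (Sum.inl J') => J' = J
  | Sum.inr (Sum.inr (e, _)) => e.val.2 = J

lemma AC_step {m r : ℕ} {J : Set (Fin m)} {u v : Fin m ⊕ Set (Fin m) ⊕ AIdx m × Fin r}
    (hadj : (Agraph m r).Adj u v) (hphi : Aphi m r v = Aphi m r u + 1)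
    (hv : AC m r J v) : AC m r J u := by
  rw [Agraph, SimpleGraph.fromRel_adj] at hadj
  rcases hadj.2 with h | h
  · match u, v with
    | Sum.inl i, Sum.inr (Sum.inl J') =>
        simp only [AC] at hv ⊢; subst hv; exact h.2
    | Sum.inl i, Sum.inr (Sum.inr (e, k)) =>
        simp only [AC] at hv ⊢
        obtain ⟨h1, -⟩ := h
        subst h1
        exact hv ▸ e.prop
    | Sum.inr (Sum.inl J'), Sum.inr (Sum.inr (e, k)) =>
        -- φ goes down here; contradiction with hphi
        exfalso
        have hk : k.val < r := k.isLt
        simp [Aphi] at hphi; omega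
    | Sum.inr (Sum.inr (e, k)), Sum.inr (Sum.inr (e', k')) =>
        simp only [AC] at hv ⊢; rw [h.1]; exact hv
  · match v, u with
    | Sum.inl i, Sum.inr (Sum.inl J') =>
        exfalso; simp [Aphi] at hphi
    | Sum.inl i, Sum.inr (Sum.inr (e, k)) =>
        exfalso; simp [Aphi] at hphi
    | Sum.inr (Sum.inl J'), Sum.inr (Sum.inr (e, k)) =>
        simp only [AC] at hv ⊢; rw [h.1]; exact hv
    | Sum.inr (Sum.inr (e, k)), Sum.inr (Sum.inr (e', k')) =>
        exfalso
        have h2 : k'.val = k.val + 1 := h.2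
        simp [Aphi] at hphi
        omega

lemma AC_walk {m r : ℕ} {J : Set (Fin m)} :
    ∀ {u v : Fin m ⊕ Set (Fin m) ⊕ AIdx m × Fin r}
    (p : (Agraph m r).Walk u v), v = Sum.inr (Sum.inl J) →
    Aphi m r u + p.length = r + 1 → AC m r J u := by
  intro u v p
  induction p with
  | nil => rintro rfl _; simp [AC]
  | @cons u w _ h q ih =>
      rintro rfl hlen
      rw [SimpleGraph.Walk.length_cons] at hlen
      have hle := Aphi_walk_le q
      have hb : Aphi m r (Sum.inr (Sum.inl J) : Fin m ⊕ Set (Fin m) ⊕ AIdx m × Fin r) = r + 1 := rfl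
      rcases Aphi_adj h with h' | h'
      · exact AC_step h h' (ih rfl (by omega))
      · exfalso; omega

/-- Existence of the tail walk inside an incidence path. -/
lemma exists_walk_from_c {m r : ℕ} (e : AIdx m) :
    ∀ t : ℕ, ∀ k : Fin r, k.val + t = r - 1 →
    ∃ p : (Agraph m r).Walk (Sum.inr (Sum.inr (e, k))) (Sum.inr (Sum.inl e.val.2)),
      p.length = t + 1 := by
  intro t
  induction t with
  | zero =>
      intro k hk
      have hadj : (Agraph m r).Adj (Sum.inr (Sum.inr (e, k))) (Sum.inr (Sum.inl e.val.2)) := by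
        rw [Agraph, SimpleGraph.fromRel_adj]
        exact ⟨by simp, Or.inr ⟨rfl, by omega⟩⟩
      exact ⟨SimpleGraph.Walk.cons hadj SimpleGraph.Walk.nil, rfl⟩
  | succ t ih =>
      intro k hk
      have hlt : k.val + 1 < r := by have := k.isLt; omega
      have hadj : (Agraph m r).Adj (Sum.inr (Sum.inr (e, k)))
          (Sum.inr (Sum.inr (e, ⟨k.val + 1, hlt⟩))) := by
        rw [Agraph, SimpleGraph.fromRel_adj]
        refine ⟨?_, Or.inl ⟨rfl, rfl⟩⟩
        simp only [ne_eq, Sum.inr.injEq, Prod.mk.injEq, true_and]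
        intro hkk
        have := congrArg Fin.val hkk
        simp at this
      obtain ⟨q, hq⟩ := ih ⟨k.val + 1, hlt⟩ (by simp; omega)
      exact ⟨SimpleGraph.Walk.cons hadj q, by simp [hq]⟩

/-- In `A_m` there is a path of length exactly `r+1` from `a_i` to `b_J` if and
only if `i ∈ J`.  Hence the formula "there is a path of length `r+1` from `x` to
`y`" defines the incidence relation on the pairs `(a_i, b_J)`. -/
theorem Agraph_path_iff_mem (r m : ℕ) (hm : 1 ≤ m) (i : Fin m) (J : Set (Fin m)) :
    (∃ p : (Agraph m r).Walk (Sum.inl i) (Sum.inr (Sum.inl J)),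
        p.IsPath ∧ p.length = r + 1) ↔ i ∈ J := by
  classical
  constructor
  · rintro ⟨p, _, hlen⟩
    have := AC_walk p rfl (by simp [Aphi, hlen])
    exact this
  · intro hiJ
    -- first build some walk of length r + 1
    have hwalk : ∃ p : (Agraph m r).Walk (Sum.inl i) (Sum.inr (Sum.inl J)),
        p.length = r + 1 := by
      rcases Nat.eq_zero_or_pos r with hr | hr
      · subst hr
        have hadj : (Agraph m 0).Adj (Sum.inl i) (Sum.inr (Sum.inl J)) := by
          rw [Agraph, SimpleGraph.fromRel_adj]
          exact ⟨by simp, Or.inl ⟨rfl, hiJ⟩⟩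
        exact ⟨SimpleGraph.Walk.cons hadj SimpleGraph.Walk.nil, rfl⟩
      · set e : AIdx m := ⟨(i, J), hiJ⟩ with he
        set k0 : Fin r := ⟨0, hr⟩ with hk0
        have hadj : (Agraph m r).Adj (Sum.inl i) (Sum.inr (Sum.inr (e, k0))) := by
          rw [Agraph, SimpleGraph.fromRel_adj]
          exact ⟨by simp, Or.inl ⟨rfl, rfl⟩⟩
        obtain ⟨q, hq⟩ := exists_walk_from_c e (r - 1) k0 (by simp [hk0])
        refine ⟨SimpleGraph.Walk.cons hadj q, ?_⟩
        simp [hq]; omega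
    obtain ⟨p, hp⟩ := hwalk
    refine ⟨p.bypass, p.bypass_isPath, le_antisymm ?_ ?_⟩
    · calc p.bypass.length ≤ p.length := p.length_bypass_le
        _ = r + 1 := hp
    · have := Aphi_walk_le p.bypass
      simpa [Aphi] using this
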